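/- Let e₀, e₁, e₂, e₃ be the standard basis of ℂ⁴, and call a 4×4 complex matrix A block-diagonal if A(i,j) = 0 whenever i ∈ {0,1} and j ∈ {2,3}, or i ∈ {2,3} and j ∈ {0,1}. Let Ψ = (e₀ ⊗ e₀ + e₂ ⊗ e₂)/√2 ∈ ℂ⁴ ⊗ ℂ⁴ ≅ ℂ¹⁶, and let P = |Ψ⟩⟨Ψ| be the corresponding rank-one 16×16 matrix. Then P does not belong to the ℂ-linear span of the set of Kronecker products {A ⊗ B : A, B ∈ M₄(ℂ), A and B block-diagonal}. -/

import Mathlib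

open Matrix

/-- A `4 × 4` complex matrix is block-diagonal w.r.t. the splitting
`ℂ⁴ = span {e₀, e₁} ⊕ span {e₂, e₃}` if its off-diagonal blocks vanish. -/
def IsBlockDiag4 (A : Matrix (Fin 4) (Fin 4) ℂ) : Prop :=
  ∀ i j : Fin 4,
    (((i : ℕ) < 2 ∧ 2 ≤ (j : ℕ)) ∨ (2 ≤ (i : ℕ) ∧ (j : ℕ) < 2)) → A i j = 0

/-- The entangled unit vector `Ψ = (e₀ ⊗ e₀ + e₂ ⊗ e₂) / √2` of `ℂ⁴ ⊗ ℂ⁴ ≅ ℂ¹⁶`. -/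
noncomputable def dqtPsi : Fin 4 × Fin 4 → ℂ := fun p =>
  ((1 / Real.sqrt 2 : ℝ) : ℂ) *
    (if p = ((0 : Fin 4), (0 : Fin 4)) then 1
     else if p = ((2 : Fin 4), (2 : Fin 4)) then 1 else 0)

/-- The rank-one projector `P = |Ψ⟩⟨Ψ|` on `ℂ¹⁶`. -/
noncomputable def dqtProj : Matrix (Fin 4 × Fin 4) (Fin 4 × Fin 4) ℂ :=
  Matrix.of fun p q => dqtPsi p * star (dqtPsi q)

/-- Doubled quantum theory violates Local Tomography: the pure state `P = |Ψ⟩⟨Ψ|` of the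
composite of two doubled qubits does not lie in the linear span of Kronecker products of
block-diagonal (single doubled-qubit) matrices. -/
theorem dqt_violates_local_tomography :
    dqtProj ∉ Submodule.span ℂ
      {N : Matrix (Fin 4 × Fin 4) (Fin 4 × Fin 4) ℂ |
        ∃ A B : Matrix (Fin 4) (Fin 4) ℂ, IsBlockDiag4 A ∧ IsBlockDiag4 B ∧
          N = Matrix.kroneckerMap (· * ·) A B} := by
  intro h
  -- the linear functional "entry at ((0,0),(2,2))"
  let f : Matrix (Fin 4 × Fin 4) (Fin 4 × Fin 4) ℂ →ₗ[ℂ] ℂ :=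
    { toFun := fun N => N ((0 : Fin 4), (0 : Fin 4)) ((2 : Fin 4), (2 : Fin 4))
      map_add' := fun M N => rfl
      map_smul' := fun c N => rfl }
  have hker : Submodule.span ℂ
      {N : Matrix (Fin 4 × Fin 4) (Fin 4 × Fin 4) ℂ |
        ∃ A B : Matrix (Fin 4) (Fin 4) ℂ, IsBlockDiag4 A ∧ IsBlockDiag4 B ∧
          N = Matrix.kroneckerMap (· * ·) A B} ≤ LinearMap.ker f := by
    rw [Submodule.span_le]
    rintro N ⟨A, B, hA, hB, rfl⟩
    have hA02 : A 0 2 = 0 := hA 0 2 (Or.inl ⟨by norm_num, by norm_num⟩)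
    show A 0 2 * B 0 2 = 0
    simp [f, LinearMap.mem_ker, Matrix.kroneckerMap, hA02]
  have hP : f dqtProj = 0 := hker h
  have : f dqtProj = ((1 / Real.sqrt 2 : ℝ) : ℂ) * ((1 / Real.sqrt 2 : ℝ) : ℂ) := by
    show dqtPsi (0, 0) * star (dqtPsi (2, 2)) = _
    simp [f, dqtProj, dqtPsi, Prod.ext_iff]
  rw [this] at hP
  have h2 : (Real.sqrt 2 : ℝ) ≠ 0 := by positivity
  simp [h2] at hP
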